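/- Let V and W be finite-dimensional complex vector spaces and let U be a linear subspace of Hom(V, W) such that every nonzero element of U is an injective linear map. Then dim U ≤ dim W − dim V + 1. -/

import Mathlib

open MvPolynomial Cardinal

namespace Stmt0Aux3

lemma whc_mul {σt : Type*} (w : σt → ℕ × ℕ) (f c : MvPolynomial σt ℂ)
    (hf : f.IsWeightedHomogeneous w (1, 1)) (d : ℕ) (hd : 1 ≤ d) :
    weightedHomogeneousComponent w (d, d) (c * f)
      = weightedHomogeneousComponent w (d - 1, d - 1) c * f := by
  classical
  ext τ
  rw [coeff_weightedHomogeneousComponent, coeff_mul, coeff_mul]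
  by_cases h : (Finsupp.weight w) τ = (d, d)
  · rw [if_pos h]
    refine Finset.sum_congr rfl fun x hx => ?_
    rw [Finset.HasAntidiagonal.mem_antidiagonal] at hx
    rw [coeff_weightedHomogeneousComponent]
    by_cases hf2 : coeff x.2 f = 0
    · rw [hf2, mul_zero, mul_zero]
    · have hw2 : Finsupp.weight w x.2 = (1, 1) := hf hf2
      have hsum : Finsupp.weight w x.1 + Finsupp.weight w x.2 = (d, d) := by
        rw [← map_add, hx, h]
      have : Finsupp.weight w x.1 = (d - 1, d - 1) := by
        rw [hw2] at hsum
        have h1 := congrArg Prod.fst hsum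
        have h2 := congrArg Prod.snd hsum
        simp only [Prod.fst_add, Prod.snd_add] at h1 h2
        ext <;> simp <;> omega
      rw [if_pos this]
  · rw [if_neg h]
    symm
    refine Finset.sum_eq_zero fun x hx => ?_
    rw [Finset.HasAntidiagonal.mem_antidiagonal] at hx
    rw [coeff_weightedHomogeneousComponent]
    by_cases hf2 : coeff x.2 f = 0
    · rw [hf2, mul_zero]
    · by_cases h1 : Finsupp.weight w x.1 = (d - 1, d - 1)
      · exfalso
        apply h
        have hw2 : Finsupp.weight w x.2 = (1, 1) := hf hf2
        have : Finsupp.weight w x.1 + Finsupp.weight w x.2 = Finsupp.weight w τ := by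
          rw [← map_add, hx]
        rw [h1, hw2] at this
        rw [← this]
        ext <;> simp <;> omega
      · rw [if_neg h1, zero_mul]

lemma weight_elim (k m : ℕ) (τ : (Fin k ⊕ Fin m) →₀ ℕ) :
    Finsupp.weight (Sum.elim (fun _ => ((1 : ℕ), (0 : ℕ))) fun _ => (0, 1)) τ
      = (∑ i, τ (Sum.inl i), ∑ j, τ (Sum.inr j)) := by
  classical
  rw [Finsupp.weight_apply, Finsupp.sum_fintype]
  · rw [Fintype.sum_sum_type]
    have h1 : ∀ i : Fin k, τ (Sum.inl i) • (Sum.elim (fun _ => ((1:ℕ),(0:ℕ))) (fun _ => (0,1))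
        (Sum.inl i : Fin k ⊕ Fin m)) = (τ (Sum.inl i), 0) := by
      intro i; simp [Prod.smul_mk]
    have h2 : ∀ j : Fin m, τ (Sum.inr j) • (Sum.elim (fun _ => ((1:ℕ),(0:ℕ))) (fun _ => (0,1))
        (Sum.inr j : Fin k ⊕ Fin m)) = ((0 : ℕ), τ (Sum.inr j)) := by
      intro j; simp [Prod.smul_mk]
    rw [Finset.sum_congr rfl fun i _ => h1 i, Finset.sum_congr rfl fun j _ => h2 j]
    ext
    · simp [Prod.fst_sum]
    · simp [Prod.snd_sum]
  · intro s; exact zero_smul ℕ _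

lemma main_aux (k' m' n' : ℕ) (c : Fin (n' + 1) → Fin (k' + 1) → Fin (m' + 1) → ℂ)
    (hns : ∀ (a : Fin (k' + 1) → ℂ) (b : Fin (m' + 1) → ℂ), a ≠ 0 → b ≠ 0 →
      ∃ r, (∑ i, ∑ j, c r i j * a i * b j) ≠ 0) :
    k' + 1 + (m' + 1) ≤ n' + 1 + 1 := by
  classical
  by_contra hcon
  push_neg at hcon
  let w : Fin (k'+1) ⊕ Fin (m'+1) → ℕ × ℕ := Sum.elim (fun _ => (1, 0)) fun _ => (0, 1)
  let f : Fin (n'+1) → MvPolynomial (Fin (k'+1) ⊕ Fin (m'+1)) ℂ := fun r =>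
    ∑ p : Fin (k'+1) × Fin (m'+1), C (c r p.1 p.2) * (X (Sum.inl p.1) * X (Sum.inr p.2))
  let I : Ideal (MvPolynomial (Fin (k'+1) ⊕ Fin (m'+1)) ℂ) := Ideal.span (Set.range f)
  have hfh : ∀ r, (f r).IsWeightedHomogeneous w (1, 1) := by
    intro r
    apply IsWeightedHomogeneous.sum
    intro p _
    have h1 : (C (c r p.1 p.2) : MvPolynomial (Fin (k'+1) ⊕ Fin (m'+1)) ℂ).IsWeightedHomogeneous w 0 :=
      isWeightedHomogeneous_C w _
    have h2 := isWeightedHomogeneous_X ℂ w (Sum.inl p.1 : Fin (k'+1) ⊕ Fin (m'+1))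
    have h3 := isWeightedHomogeneous_X ℂ w (Sum.inr p.2 : Fin (k'+1) ⊕ Fin (m'+1))
    have h4 := h1.mul (h2.mul h3)
    have : (0 : ℕ × ℕ) + (w (Sum.inl p.1) + w (Sum.inr p.2)) = (1, 1) := by
      simp [w]
    rwa [this] at h4
  have hwelim : ∀ τ : (Fin (k'+1) ⊕ Fin (m'+1)) →₀ ℕ,
      Finsupp.weight w τ = (∑ i, τ (Sum.inl i), ∑ j, τ (Sum.inr j)) :=
    fun τ => weight_elim _ _ τ
  have heval : ∀ (x : Fin (k'+1) ⊕ Fin (m'+1) → ℂ) r,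
      eval x (f r) = ∑ i, ∑ j, c r i j * x (Sum.inl i) * x (Sum.inr j) := by
    intro x r
    simp [f, eval_sum, eval_mul, eval_C, eval_X, Fintype.sum_prod_type, mul_assoc]
  have hrad : ∀ (i : Fin (k'+1)) (j : Fin (m'+1)),
      (X (Sum.inl i) * X (Sum.inr j) : MvPolynomial (Fin (k'+1) ⊕ Fin (m'+1)) ℂ) ∈ I.radical := by
    intro i j
    rw [← vanishingIdeal_zeroLocus_eq_radical (K := ℂ), mem_vanishingIdeal_iff]
    intro x hx
    show eval x (X (Sum.inl i) * X (Sum.inr j)) = 0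
    rw [mem_zeroLocus_iff] at hx
    have hfr : ∀ r, eval x (f r) = 0 := fun r => hx _ (Ideal.subset_span ⟨r, rfl⟩)
    rw [eval_mul, eval_X, eval_X]
    by_contra habs
    have ha : (fun i' => x (Sum.inl i')) ≠ 0 := by
      intro h0
      exact habs (by rw [show x (Sum.inl i) = 0 from congrFun h0 i, zero_mul])
    have hb : (fun j' => x (Sum.inr j')) ≠ 0 := by
      intro h0
      exact habs (by rw [show x (Sum.inr j) = 0 from congrFun h0 j, mul_zero])
    obtain ⟨r, hr⟩ := hns _ _ ha hb
    exact hr (by rw [← heval x r, hfr r])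
  -- uniform exponent
  choose Nf hNf using fun (p : Fin (k'+1) × Fin (m'+1)) => Ideal.mem_radical_iff.mp (hrad p.1 p.2)
  set N : ℕ := (Finset.univ.sup Nf) + 1 with hNdef
  have hN1 : 1 ≤ N := by omega
  have hNI : ∀ (i : Fin (k'+1)) (j : Fin (m'+1)),
      (X (Sum.inl i) * X (Sum.inr j) : MvPolynomial (Fin (k'+1) ⊕ Fin (m'+1)) ℂ) ^ N ∈ I := by
    intro i j
    have h2 : Nf (i, j) ≤ N :=
      le_trans (Finset.le_sup (Finset.mem_univ (i, j))) (Nat.le_succ _)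
    have heq : (X (Sum.inl i) * X (Sum.inr j) : MvPolynomial (Fin (k'+1) ⊕ Fin (m'+1)) ℂ) ^ N
        = (X (Sum.inl i) * X (Sum.inr j)) ^ (Nf (i, j))
          * (X (Sum.inl i) * X (Sum.inr j)) ^ (N - Nf (i, j)) := by
      rw [← pow_add]; congr 1; omega
    rw [heq]
    exact I.mul_mem_right _ (hNf (i, j))
  set D : ℕ := ((k'+1) + (m'+1)) * N with hDdef
  -- monomials of large bidegree are in I
  have hmono : ∀ (d : ℕ) (τ : (Fin (k'+1) ⊕ Fin (m'+1)) →₀ ℕ), D ≤ d →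
      Finsupp.weight w τ = (d, d) → (monomial τ (1 : ℂ)) ∈ I := by
    intro d τ hDd hτ
    rw [hwelim τ] at hτ
    have h1 : ∑ i, τ (Sum.inl i) = d := congrArg Prod.fst hτ
    have h2 : ∑ j, τ (Sum.inr j) = d := congrArg Prod.snd hτ
    have e2 : (k'+1) * N ≤ ((k'+1) + (m'+1)) * N := Nat.mul_le_mul_right _ (by omega)
    have e2' : (m'+1) * N ≤ ((k'+1) + (m'+1)) * N := Nat.mul_le_mul_right _ (by omega)
    have hex1 : ∃ i, N ≤ τ (Sum.inl i) := by
      by_contra h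
      push_neg at h
      have hs : ∑ i, τ (Sum.inl i) ≤ ∑ _i : Fin (k'+1), (N - 1) :=
        Finset.sum_le_sum fun i _ => by have := h i; omega
      rw [Finset.sum_const, Finset.card_univ, Fintype.card_fin, smul_eq_mul] at hs
      have e1 : (k'+1) * (N - 1) + (k'+1) = (k'+1) * N := by
        rw [← Nat.mul_succ, Nat.succ_eq_add_one, Nat.sub_add_cancel hN1]
      omega
    have hex2 : ∃ j, N ≤ τ (Sum.inr j) := by
      by_contra h
      push_neg at h
      have hs : ∑ j, τ (Sum.inr j) ≤ ∑ _j : Fin (m'+1), (N - 1) :=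
        Finset.sum_le_sum fun j _ => by have := h j; omega
      rw [Finset.sum_const, Finset.card_univ, Fintype.card_fin, smul_eq_mul] at hs
      have e1 : (m'+1) * (N - 1) + (m'+1) = (m'+1) * N := by
        rw [← Nat.mul_succ, Nat.succ_eq_add_one, Nat.sub_add_cancel hN1]
      omega
    obtain ⟨i, hi⟩ := hex1
    obtain ⟨j, hj⟩ := hex2
    set τ₂ : (Fin (k'+1) ⊕ Fin (m'+1)) →₀ ℕ :=
      Finsupp.single (Sum.inl i) N + Finsupp.single (Sum.inr j) N with hτ₂def
    have hle : τ₂ ≤ τ := by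
      rw [Finsupp.le_def]
      intro s
      rcases s with i' | j'
      · simp only [hτ₂def, Finsupp.add_apply, Finsupp.single_apply]
        by_cases h1 : i = i'
        · subst h1; simp [hi]
        · simp [h1]
      · simp only [hτ₂def, Finsupp.add_apply, Finsupp.single_apply]
        by_cases h1 : j = j'
        · subst h1; simp [hj]
        · simp [h1]
    have hpow : ((X (Sum.inl i) * X (Sum.inr j) :
        MvPolynomial (Fin (k'+1) ⊕ Fin (m'+1)) ℂ)) ^ N = monomial τ₂ 1 := by
      rw [mul_pow, X_pow_eq_monomial, X_pow_eq_monomial, monomial_mul, one_mul]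
    have hfact : monomial τ (1:ℂ)
        = (X (Sum.inl i) * X (Sum.inr j)) ^ N * monomial (τ - τ₂) 1 := by
      rw [hpow, monomial_mul, one_mul, add_tsub_cancel_of_le hle]
    rw [hfact]
    exact I.mul_mem_right _ (hNI i j)
  -- the spanning sets
  let GS : ℕ → Set (MvPolynomial (Fin (k'+1) ⊕ Fin (m'+1)) ℂ) := fun e =>
    (fun gt : (Fin (n'+1) → ℕ) × ((Fin (k'+1) ⊕ Fin (m'+1)) →₀ ℕ) =>
        (∏ r, f r ^ gt.1 r) * monomial gt.2 1) ''
      {gt | (∑ r, gt.1 r) = e ∧ Finsupp.weight w gt.2 = (D, D)}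
  let G : ℕ → Submodule ℂ (MvPolynomial (Fin (k'+1) ⊕ Fin (m'+1)) ℂ) := fun e => Submodule.span ℂ (GS e)
  have hQG : ∀ e (p : MvPolynomial (Fin (k'+1) ⊕ Fin (m'+1)) ℂ),
      p.IsWeightedHomogeneous w (D + e, D + e) → p ∈ G e := by
    intro e
    induction e with
    | zero =>
      intro p hp
      rw [← support_sum_monomial_coeff p]
      apply Submodule.sum_mem
      intro τ hτ
      have hcoeff : coeff τ p ≠ 0 := mem_support_iff.mp hτ
      have hwt : Finsupp.weight w τ = (D, D) := by
        have := hp hcoeff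
        simpa using this
      have hm1 : (monomial τ (coeff τ p)) = (coeff τ p) • monomial τ (1:ℂ) := by
        rw [smul_monomial, smul_eq_mul, mul_one]
      rw [hm1]
      refine Submodule.smul_mem _ _ (Submodule.subset_span ?_)
      refine ⟨(0, τ), ⟨by simp, hwt⟩, ?_⟩
      simp
    | succ e ih =>
      intro p hp
      have hpI : p ∈ I := by
        rw [← support_sum_monomial_coeff p]
        apply Ideal.sum_mem
        intro τ hτ
        have hcoeff : coeff τ p ≠ 0 := mem_support_iff.mp hτ
        have hm1 : (monomial τ (coeff τ p)) = C (coeff τ p) * monomial τ (1:ℂ) := by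
          rw [C_mul_monomial, mul_one]
        rw [hm1]
        exact I.mul_mem_left _ (hmono (D + (e+1)) τ (by omega) (hp hcoeff))
      obtain ⟨cc, hcc⟩ := (Submodule.mem_span_range_iff_exists_fun _).mp hpI
      have hdecomp : p = ∑ r, (weightedHomogeneousComponent w (D + e, D + e) (cc r)) * f r := by
        conv_lhs => rw [← hp.weightedHomogeneousComponent_same, ← hcc]
        rw [map_sum]
        refine Finset.sum_congr rfl fun r _ => ?_
        have h5 := whc_mul w (f r) (cc r) (hfh r) (D + (e+1)) (by omega)
        rw [smul_eq_mul, h5]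
        congr 2 <;> omega
      rw [hdecomp]
      apply Submodule.sum_mem
      intro r _
      have h1 : (weightedHomogeneousComponent w (D + e, D + e) (cc r)) ∈ G e :=
        ih _ (weightedHomogeneousComponent_isWeightedHomogeneous _ _)
      have hmul : ∀ q ∈ G e, q * f r ∈ G (e + 1) := by
        intro q hq
        induction hq using Submodule.span_induction with
        | mem x hx =>
          obtain ⟨⟨γ, τ⟩, ⟨hγ, hτ⟩, rfl⟩ := hx
          have hsum : ∑ s, (γ + Pi.single r 1 : Fin (n'+1) → ℕ) s = e + 1 := by
            simp only [Pi.add_apply, Finset.sum_add_distrib, hγ, Finset.sum_pi_single']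
            simp
          have hprod : (∏ s, f s ^ (γ + Pi.single r 1 : Fin (n'+1) → ℕ) s)
              = (∏ s, f s ^ γ s) * f r := by
            have h6 : ∀ s, f s ^ (γ + Pi.single r 1 : Fin (n'+1) → ℕ) s
                = f s ^ γ s * f s ^ (Pi.single r 1 : Fin (n'+1) → ℕ) s := by
              intro s; rw [Pi.add_apply, pow_add]
            rw [Finset.prod_congr rfl fun s _ => h6 s, Finset.prod_mul_distrib]
            congr 1
            rw [Finset.prod_eq_single r (fun s _ hs => by rw [Pi.single_eq_of_ne hs, pow_zero])
              (fun h => absurd (Finset.mem_univ r) h)]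
            rw [Pi.single_eq_same, pow_one]
          have key : (∏ s, f s ^ γ s) * (monomial τ (1:ℂ)) * f r
              = (∏ s, f s ^ (γ + Pi.single r 1 : Fin (n'+1) → ℕ) s) * monomial τ 1 := by
            rw [hprod]; ring
          rw [key]
          exact Submodule.subset_span
            ⟨⟨(γ + Pi.single r 1 : Fin (n'+1) → ℕ), τ⟩, ⟨hsum, hτ⟩, rfl⟩
        | zero => simp
        | add x y _ _ hx hy => rw [add_mul]; exact add_mem hx hy
        | smul a x _ hx => rw [smul_mul_assoc]; exact Submodule.smul_mem _ _ hx
      exact hmul _ h1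
  -- counting
  have hcard : ∀ E : ℕ,
      (E + 1) ^ k' * (E + 1) ^ m' ≤ (((k'+1) + (m'+1)) * E + 1) ^ n' * (D + 1) ^ ((k'+1) + (m'+1)) := by
    intro E
    set e := ((k'+1) + (m'+1)) * E with hedef
    let αf : (Fin k' → Fin (E+1)) → Fin (k'+1) → ℕ := fun γ i =>
      if h : (i : ℕ) < k' then (γ ⟨i, h⟩ : ℕ) else (D + e) - ∑ t, (γ t : ℕ)
    let βf : (Fin m' → Fin (E+1)) → Fin (m'+1) → ℕ := fun δ j =>
      if h : (j : ℕ) < m' then (δ ⟨j, h⟩ : ℕ) else (D + e) - ∑ t, (δ t : ℕ)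
    have hα1 : ∀ γ (t : Fin k'), αf γ (Fin.castSucc t) = γ t := by
      intro γ t
      have hlt : ((Fin.castSucc t : Fin (k'+1)) : ℕ) < k' := t.isLt
      simp only [αf]
      rw [dif_pos hlt]
      congr 1
    have hβ1 : ∀ δ (t : Fin m'), βf δ (Fin.castSucc t) = δ t := by
      intro δ t
      have hlt : ((Fin.castSucc t : Fin (m'+1)) : ℕ) < m' := t.isLt
      simp only [βf]
      rw [dif_pos hlt]
      congr 1
    have hγsum : ∀ γ : Fin k' → Fin (E+1), (∑ t, (γ t : ℕ)) ≤ e := by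
      intro γ
      calc ∑ t, (γ t : ℕ) ≤ ∑ _t : Fin k', E := Finset.sum_le_sum fun t _ => Fin.is_le _
      _ = k' * E := by rw [Finset.sum_const, Finset.card_univ, Fintype.card_fin, smul_eq_mul]
      _ ≤ ((k'+1) + (m'+1)) * E := Nat.mul_le_mul_right _ (by omega)
    have hδsum : ∀ δ : Fin m' → Fin (E+1), (∑ t, (δ t : ℕ)) ≤ e := by
      intro δ
      calc ∑ t, (δ t : ℕ) ≤ ∑ _t : Fin m', E := Finset.sum_le_sum fun t _ => Fin.is_le _
      _ = m' * E := by rw [Finset.sum_const, Finset.card_univ, Fintype.card_fin, smul_eq_mul]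
      _ ≤ ((k'+1) + (m'+1)) * E := Nat.mul_le_mul_right _ (by omega)
    have hαsum : ∀ γ, ∑ i, αf γ i = D + e := by
      intro γ
      rw [Fin.sum_univ_castSucc, Finset.sum_congr rfl fun t _ => hα1 γ t]
      have h2 : αf γ (Fin.last k') = (D + e) - ∑ t, (γ t : ℕ) := by
        simp only [αf]
        rw [dif_neg (by simp)]
      rw [h2]
      have := hγsum γ
      omega
    have hβsum : ∀ δ, ∑ j, βf δ j = D + e := by
      intro δ
      rw [Fin.sum_univ_castSucc, Finset.sum_congr rfl fun t _ => hβ1 δ t]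
      have h2 : βf δ (Fin.last m') = (D + e) - ∑ t, (δ t : ℕ) := by
        simp only [βf]
        rw [dif_neg (by simp)]
      rw [h2]
      have := hδsum δ
      omega
    let ι := (Fin k' → Fin (E+1)) × (Fin m' → Fin (E+1))
    let τf : ι → ((Fin (k'+1) ⊕ Fin (m'+1)) →₀ ℕ) :=
      fun gd => Finsupp.equivFunOnFinite.symm (Sum.elim (αf gd.1) (βf gd.2))
    have hτapp : ∀ (gd : ι) s, τf gd s = Sum.elim (αf gd.1) (βf gd.2) s := fun gd s => rfl
    have hτwt : ∀ gd : ι, Finsupp.weight w (τf gd) = ((D + e : ℕ), (D + e : ℕ)) := by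
      intro gd
      rw [hwelim (τf gd)]
      have e1 : ∑ i, τf gd (Sum.inl i) = D + e := by
        rw [Finset.sum_congr rfl fun i _ => hτapp gd (Sum.inl i)]
        exact hαsum gd.1
      have e2 : ∑ j, τf gd (Sum.inr j) = D + e := by
        rw [Finset.sum_congr rfl fun j _ => hτapp gd (Sum.inr j)]
        exact hβsum gd.2
      rw [e1, e2]
    have hτinj : Function.Injective τf := by
      intro x y hxy
      have happ : ∀ s, Sum.elim (αf x.1) (βf x.2) s = Sum.elim (αf y.1) (βf y.2) s := by
        intro s
        rw [← hτapp, ← hτapp, hxy]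
      have h1 : x.1 = y.1 := by
        funext t
        have := happ (Sum.inl (Fin.castSucc t))
        simp only [Sum.elim_inl] at this
        rw [hα1, hα1] at this
        exact Fin.ext this
      have h2 : x.2 = y.2 := by
        funext t
        have := happ (Sum.inr (Fin.castSucc t))
        simp only [Sum.elim_inr] at this
        rw [hβ1, hβ1] at this
        exact Fin.ext this
      exact Prod.ext h1 h2
    have hmem : ∀ gd : ι, (monomial (τf gd) (1:ℂ)) ∈ G e := by
      intro gd
      refine hQG e _ (isWeightedHomogeneous_monomial _ _ _ ?_)
      exact hτwt gd
    have hli : LinearIndependent ℂ (fun gd : ι => (monomial (τf gd) (1:ℂ))) := by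
      have hb := (basisMonomials (Fin (k'+1) ⊕ Fin (m'+1)) ℂ).linearIndependent
      have := hb.comp τf hτinj
      rwa [show ⇑(basisMonomials (Fin (k'+1) ⊕ Fin (m'+1)) ℂ) ∘ τf
          = fun gd : ι => (monomial (τf gd) (1:ℂ)) from funext fun gd => by
        simp [coe_basisMonomials]] at this
    have hli2 : LinearIndependent ℂ (fun gd : ι => (⟨monomial (τf gd) 1, hmem gd⟩ : G e)) := by
      apply LinearIndependent.of_comp (G e).subtype
      exact hli
    have c1 : (#ι) ≤ Module.rank ℂ (G e) := hli2.cardinal_le_rank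
    have c2 : Module.rank ℂ (G e) ≤ #(GS e) := rank_span_le _
    have c3 : #(GS e) ≤ #({gt : (Fin (n'+1) → ℕ) × ((Fin (k'+1) ⊕ Fin (m'+1)) →₀ ℕ) |
        (∑ r, gt.1 r) = e ∧ Finsupp.weight w gt.2 = (D, D)}) := Cardinal.mk_image_le
    have c4 : #({gt : (Fin (n'+1) → ℕ) × ((Fin (k'+1) ⊕ Fin (m'+1)) →₀ ℕ) |
        (∑ r, gt.1 r) = e ∧ Finsupp.weight w gt.2 = (D, D)}) ≤
        #((Fin n' → Fin (e+1)) × ((Fin (k'+1) ⊕ Fin (m'+1)) → Fin (D+1))) := by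
      have hbound1 : ∀ (x : {gt : (Fin (n'+1) → ℕ) × ((Fin (k'+1) ⊕ Fin (m'+1)) →₀ ℕ) |
          (∑ r, gt.1 r) = e ∧ Finsupp.weight w gt.2 = (D, D)}) (t : Fin n'),
          x.1.1 (Fin.castSucc t) < e + 1 := by
        intro x t
        have hx := x.2.1
        have : x.1.1 (Fin.castSucc t) ≤ ∑ r, x.1.1 r :=
          Finset.single_le_sum (fun r _ => Nat.zero_le _) (Finset.mem_univ _)
        omega
      have hbound2 : ∀ (x : {gt : (Fin (n'+1) → ℕ) × ((Fin (k'+1) ⊕ Fin (m'+1)) →₀ ℕ) |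
          (∑ r, gt.1 r) = e ∧ Finsupp.weight w gt.2 = (D, D)}) s, x.1.2 s < D + 1 := by
        intro x s
        have hx := x.2.2
        rw [hwelim x.1.2] at hx
        have h1 : ∑ i, x.1.2 (Sum.inl i) = D := congrArg Prod.fst hx
        have h2 : ∑ j, x.1.2 (Sum.inr j) = D := congrArg Prod.snd hx
        rcases s with i | j
        · have : x.1.2 (Sum.inl i) ≤ ∑ i', x.1.2 (Sum.inl i') :=
            Finset.single_le_sum (f := fun i' => x.1.2 (Sum.inl i'))
              (fun r _ => Nat.zero_le _) (Finset.mem_univ i)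
          omega
        · have : x.1.2 (Sum.inr j) ≤ ∑ j', x.1.2 (Sum.inr j') :=
            Finset.single_le_sum (f := fun j' => x.1.2 (Sum.inr j'))
              (fun r _ => Nat.zero_le _) (Finset.mem_univ j)
          omega
      apply Cardinal.mk_le_of_injective (f := fun x =>
        (fun t => (⟨x.1.1 (Fin.castSucc t), hbound1 x t⟩ : Fin (e+1)),
         fun s => (⟨x.1.2 s, hbound2 x s⟩ : Fin (D+1))))
      intro x y hxy
      have hxy1 := congrArg Prod.fst hxy
      have hxy2 := congrArg Prod.snd hxy
      simp only at hxy1 hxy2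
      have hg1 : ∀ t : Fin n', x.1.1 (Fin.castSucc t) = y.1.1 (Fin.castSucc t) := by
        intro t
        have := congrFun hxy1 t
        exact congrArg Fin.val this
      have hgsum : (∑ r, x.1.1 r) = ∑ r, y.1.1 r := by rw [x.2.1, y.2.1]
      have hglast : x.1.1 (Fin.last n') = y.1.1 (Fin.last n') := by
        rw [Fin.sum_univ_castSucc, Fin.sum_univ_castSucc] at hgsum
        rw [Finset.sum_congr rfl fun t _ => hg1 t] at hgsum
        omega
      have h1 : x.1.1 = y.1.1 := by
        funext i
        induction i using Fin.lastCases with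
        | last => exact hglast
        | cast t => exact hg1 t
      have h2 : x.1.2 = y.1.2 := by
        ext s
        have := congrFun hxy2 s
        exact congrArg Fin.val this
      exact Subtype.ext (Prod.ext h1 h2)
    have hcι : (#ι) = (((E+1) ^ k' * (E+1) ^ m' : ℕ) : Cardinal) := by
      rw [Cardinal.mk_fintype]
      congr 1
      simp [ι, Fintype.card_fun]
    have hct : #((Fin n' → Fin (e+1)) × ((Fin (k'+1) ⊕ Fin (m'+1)) → Fin (D+1)))
        = (((e+1) ^ n' * (D+1) ^ ((k'+1) + (m'+1)) : ℕ) : Cardinal) := by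
      rw [Cardinal.mk_fintype]
      congr 1
      simp [Fintype.card_fun]
    have hchain := le_trans (le_trans (le_trans c1 c2) c3) c4
    rw [hcι, hct, Nat.cast_le] at hchain
    exact hchain
  -- final contradiction
  set CC : ℕ := ((k'+1) + (m'+1)) ^ n' * (D + 1) ^ ((k'+1) + (m'+1)) with hCCdef
  have := hcard CC
  have hpow : (CC + 1) ^ k' * (CC + 1) ^ m' = (CC + 1) ^ (k' + m') := (pow_add _ _ _).symm
  have hge : (CC + 1) ^ (n' + 1) ≤ (CC + 1) ^ (k' + m') :=
    Nat.pow_le_pow_right (by omega) (by omega)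
  have hub : (((k'+1) + (m'+1)) * CC + 1) ^ n' ≤ (CC + 1) ^ n' * ((k'+1) + (m'+1)) ^ n' := by
    rw [← mul_pow]
    exact Nat.pow_le_pow_left (by nlinarith) _
  have hfinal : (CC + 1) ^ n' * (CC + 1) ≤ (CC + 1) ^ n' * CC := by
    calc (CC + 1) ^ n' * (CC + 1) = (CC + 1) ^ (n' + 1) := by rw [pow_succ]
    _ ≤ (CC + 1) ^ (k' + m') := hge
    _ = (CC + 1) ^ k' * (CC + 1) ^ m' := by rw [pow_add]
    _ ≤ (((k'+1) + (m'+1)) * CC + 1) ^ n' * (D + 1) ^ ((k'+1) + (m'+1)) := this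
    _ ≤ ((CC + 1) ^ n' * ((k'+1) + (m'+1)) ^ n') * (D + 1) ^ ((k'+1) + (m'+1)) := by
        exact Nat.mul_le_mul_right _ hub
    _ = (CC + 1) ^ n' * CC := by rw [hCCdef]; ring
  have := Nat.le_of_mul_le_mul_left hfinal (by positivity)
  omega

end Stmt0Aux3


open Module in
/-- Let `V` and `W` be finite-dimensional complex vector spaces and let `U` be a linear
subspace of `Hom(V, W)` such that every nonzero element of `U` is injective.
Then `dim U ≤ dim W − dim V + 1` (truncated subtraction on ℕ). -/
theorem stmt0 (V W : Type*) [AddCommGroup V] [Module ℂ V] [AddCommGroup W] [Module ℂ W]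
    [FiniteDimensional ℂ V] [FiniteDimensional ℂ W]
    (U : Submodule ℂ (V →ₗ[ℂ] W))
    (hU : ∀ u ∈ U, u ≠ 0 → Function.Injective u) :
    Module.finrank ℂ U ≤ Module.finrank ℂ W - Module.finrank ℂ V + 1 := by
  classical
  rcases Nat.eq_zero_or_pos (finrank ℂ U) with hk0 | hk
  · rw [hk0]; exact Nat.zero_le _
  rcases Nat.eq_zero_or_pos (finrank ℂ V) with hm0 | hm
  · -- V is trivial, so Hom(V, W) is trivial and U has rank 0
    have hsV : Subsingleton V := (Module.finrank_zero_iff (R := ℂ)).mp hm0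
    have hsH : Subsingleton (V →ₗ[ℂ] W) :=
      ⟨fun f g => LinearMap.ext fun v => by
        rw [Subsingleton.elim v 0, map_zero, map_zero]⟩
    have : Subsingleton U := ⟨fun a b => Subtype.ext (Subsingleton.elim _ _)⟩
    have : finrank ℂ U = 0 := Module.finrank_zero_of_subsingleton
    omega
  -- pick a nonzero element of U to see that dim V ≤ dim W
  have : Nontrivial U := Module.nontrivial_of_finrank_pos hk
  obtain ⟨u₀, hu₀⟩ := exists_ne (0 : U)
  have hu₀inj : Function.Injective (u₀ : V →ₗ[ℂ] W) :=
    hU _ u₀.2 (fun h => hu₀ (Subtype.ext h))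
  have hmn : finrank ℂ V ≤ finrank ℂ W :=
    LinearMap.finrank_le_finrank_of_injective hu₀inj
  have hn : 1 ≤ finrank ℂ W := le_trans hm hmn
  suffices h : finrank ℂ U + finrank ℂ V ≤ finrank ℂ W + 1 by omega
  -- set up bases
  obtain ⟨k', hk'⟩ : ∃ k', finrank ℂ U = k' + 1 := ⟨finrank ℂ U - 1, by omega⟩
  obtain ⟨m', hm'⟩ : ∃ m', finrank ℂ V = m' + 1 := ⟨finrank ℂ V - 1, by omega⟩
  obtain ⟨n', hn'⟩ : ∃ n', finrank ℂ W = n' + 1 := ⟨finrank ℂ W - 1, by omega⟩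
  rw [hk', hm', hn']
  let bU : Basis (Fin (k' + 1)) ℂ U := hk' ▸ Module.finBasis ℂ U
  let bV : Basis (Fin (m' + 1)) ℂ V := hm' ▸ Module.finBasis ℂ V
  let bW : Basis (Fin (n' + 1)) ℂ W := hn' ▸ Module.finBasis ℂ W
  apply Stmt0Aux3.main_aux k' m' n'
    (fun r i j => bW.repr ((bU i : V →ₗ[ℂ] W) (bV j)) r)
  intro a b ha hb
  by_contra hall
  push_neg at hall
  set u : U := bU.equivFun.symm a with hudef
  set v : V := bV.equivFun.symm b with hvdef
  have hu : u ≠ 0 := by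
    intro h0
    apply ha
    have : bU.equivFun u = bU.equivFun 0 := by rw [h0]
    rw [hudef, LinearEquiv.apply_symm_apply, map_zero] at this
    exact this
  have hv : v ≠ 0 := by
    intro h0
    apply hb
    have : bV.equivFun v = bV.equivFun 0 := by rw [h0]
    rw [hvdef, LinearEquiv.apply_symm_apply, map_zero] at this
    exact this
  have hexp : (u : V →ₗ[ℂ] W) v = ∑ i, ∑ j, (a i * b j) • ((bU i : V →ₗ[ℂ] W) (bV j)) := by
    rw [hudef, hvdef, Basis.equivFun_symm_apply, Basis.equivFun_symm_apply]
    rw [show ((∑ i, a i • bU i : U) : V →ₗ[ℂ] W) = ∑ i, a i • (bU i : V →ₗ[ℂ] W) by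
      push_cast [Submodule.coe_sum]; rfl]
    rw [LinearMap.sum_apply]
    refine Finset.sum_congr rfl fun i _ => ?_
    rw [LinearMap.smul_apply, map_sum, Finset.smul_sum]
    refine Finset.sum_congr rfl fun j _ => ?_
    rw [map_smul, smul_smul]
  have hrepr : ∀ r, bW.repr ((u : V →ₗ[ℂ] W) v) r = 0 := by
    intro r
    rw [hexp]
    rw [map_sum, Finsupp.coe_finset_sum, Finset.sum_apply]
    have : ∀ i : Fin (k' + 1),
        (bW.repr (∑ j, (a i * b j) • ((bU i : V →ₗ[ℂ] W) (bV j)))) r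
          = ∑ j, (bW.repr ((bU i : V →ₗ[ℂ] W) (bV j))) r * a i * b j := by
      intro i
      rw [map_sum, Finsupp.coe_finset_sum, Finset.sum_apply]
      refine Finset.sum_congr rfl fun j _ => ?_
      rw [map_smul]
      simp [smul_eq_mul]
      ring
    rw [Finset.sum_congr rfl fun i _ => this i]
    exact hall r
  have huv0 : (u : V →ₗ[ℂ] W) v = 0 := by
    have : bW.repr ((u : V →ₗ[ℂ] W) v) = 0 := by
      ext r
      exact hrepr r
    simpa using congrArg bW.repr.symm this
  have huinj : Function.Injective (u : V →ₗ[ℂ] W) :=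
    hU _ u.2 (fun h => hu (Subtype.ext h))
  exact hv (huinj (by rw [huv0, map_zero]))
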